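/- Let $M \subseteq \mathbb{Z}^n$ be a positive normal affine monoid with $\mathrm{gp}(M) = \mathbb{Z}^n$ and support forms $\sigma_1, \dots, \sigma_s$. If $y \in M$ satisfies $\sigma_i(y) = 1$ for all $i$, then $\mathrm{relint}(M) = y + M$. -/

import Mathlib

open scoped BigOperators

noncomputable section

/-- The canonical map `ℤⁿ → ℝⁿ`. -/
def toR {n : ℕ} (z : Fin n → ℤ) : Fin n → ℝ := fun i => (z i : ℝ)

/-- The real extension of an integral linear form. -/
def realForm {n : ℕ} (ℓ : (Fin n → ℤ) →ₗ[ℤ] ℤ) (x : Fin n → ℝ) : ℝ :=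
  ∑ k, (ℓ (Pi.single k 1) : ℝ) * x k

/-- The cone in `ℝⁿ` generated by a set of lattice points. -/
def coneOf {n : ℕ} (M : Set (Fin n → ℤ)) : Set (Fin n → ℝ) :=
  {x | ∃ (t : Finset (Fin n → ℤ)) (c : (Fin n → ℤ) → ℝ),
    (↑t : Set (Fin n → ℤ)) ⊆ M ∧ (∀ a, 0 ≤ c a) ∧ x = ∑ a ∈ t, c a • toR a}

/-- `relint M` with respect to the support forms `σ`. -/
def relintM {n s : ℕ} (M : AddSubmonoid (Fin n → ℤ))
    (σ : Fin s → ((Fin n → ℤ) →ₗ[ℤ] ℤ)) : Set (Fin n → ℤ) :=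
  {a | a ∈ M ∧ ∀ i, 0 < σ i a}

/-! ### Auxiliary lemmas -/

lemma realForm_toR {n : ℕ} (ℓ : (Fin n → ℤ) →ₗ[ℤ] ℤ) (z : Fin n → ℤ) :
    realForm ℓ (toR z) = (ℓ z : ℝ) := by
  rw [LinearMap.pi_apply_eq_sum_univ ℓ z]
  push_cast [realForm, toR]
  refine Finset.sum_congr rfl fun k _ => ?_
  have : (Pi.single k 1 : Fin n → ℤ) = fun j => if k = j then 1 else 0 := by
    ext j; simp [Pi.single_apply, eq_comm]
  rw [this, smul_eq_mul]; push_cast; ring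

lemma toR_mem_coneOf {n : ℕ} {M : Set (Fin n → ℤ)} {a : Fin n → ℤ} (ha : a ∈ M) :
    toR a ∈ coneOf M := by
  refine ⟨{a}, fun b => if b = a then 1 else 0, by simpa using ha, fun b => by positivity, ?_⟩
  simp

/-- Carathéodory-type reduction for cones. -/
lemma carath_aux {n : ℕ} (S : Set (Fin n → ℤ)) (x : Fin n → ℝ) :
    ∀ (N : ℕ) (t : Finset (Fin n → ℤ)) (c : (Fin n → ℤ) → ℝ),
    t.card ≤ N → (↑t : Set (Fin n → ℤ)) ⊆ S → (∀ a, 0 ≤ c a) →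
    x = ∑ a ∈ t, c a • toR a →
    ∃ (t' : Finset (Fin n → ℤ)) (c' : (Fin n → ℤ) → ℝ),
      (↑t' : Set (Fin n → ℤ)) ⊆ S ∧ (∀ a, 0 ≤ c' a) ∧
      x = ∑ a ∈ t', c' a • toR a ∧
      LinearIndependent ℝ (fun a : ↥t' => toR (a : Fin n → ℤ)) := by
  intro N
  induction N with
  | zero =>
    intro t c hcard hsub hc hx
    refine ⟨t, c, hsub, hc, hx, ?_⟩
    have : t = ∅ := Finset.card_eq_zero.mp (Nat.le_zero.mp hcard)
    subst this
    exact linearIndependent_empty_type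
  | succ N ih =>
    intro t c hcard hsub hc hx
    by_cases hli : LinearIndependent ℝ (fun a : ↥t => toR (a : Fin n → ℤ))
    · exact ⟨t, c, hsub, hc, hx, hli⟩
    · obtain ⟨g, hg0, i₀, hi₀⟩ := Fintype.not_linearIndependent_iff.mp hli
      -- get g with some positive coordinate
      obtain ⟨g, hg0, i₀, hi₀⟩ :
          ∃ g : ↥t → ℝ, (∑ i, g i • toR (i : Fin n → ℤ)) = 0 ∧ ∃ i, 0 < g i := by
        rcases lt_or_gt_of_ne hi₀ with h | h
        · exact ⟨-g, by simpa using hg0, i₀, by simpa using h⟩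
        · exact ⟨g, hg0, i₀, h⟩
      classical
      set P : Finset ↥t := Finset.univ.filter (fun i => 0 < g i) with hP
      have hPne : P.Nonempty := ⟨i₀, by simp [hP, hi₀]⟩
      obtain ⟨i₁, hi₁P, hi₁min⟩ :=
        Finset.exists_min_image P (fun i => c (i : Fin n → ℤ) / g i) hPne
      have hgi₁ : 0 < g i₁ := (Finset.mem_filter.mp hi₁P).2
      set lam : ℝ := c (i₁ : Fin n → ℤ) / g i₁ with hlam
      have hlam0 : 0 ≤ lam := div_nonneg (hc _) hgi₁.le
      set c' : (Fin n → ℤ) → ℝ :=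
        fun a => if h : a ∈ t then c a - lam * g ⟨a, h⟩ else 0 with hc'
      have hinj : Function.Injective (fun a : ↥t => (a : Fin n → ℤ)) := Subtype.val_injective
      have hc'nn : ∀ a, 0 ≤ c' a := by
        intro a
        by_cases h : a ∈ t
        · simp only [hc', dif_pos h]
          by_cases hg : 0 < g ⟨a, h⟩
          · have h1 : lam ≤ c a / g ⟨a, h⟩ := hi₁min ⟨a, h⟩ (by simp [hP, hg])
            have h2 : lam * g ⟨a, h⟩ ≤ c a := (le_div_iff₀ hg).mp h1
            linarith
          · push_neg at hg
            have : lam * g ⟨a, h⟩ ≤ 0 := mul_nonpos_of_nonneg_of_nonpos hlam0 hg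
            linarith [hc a]
        · simp [hc', h]
      have hc'i₁ : c' (i₁ : Fin n → ℤ) = 0 := by
        simp only [hc', dif_pos i₁.2]
        rw [hlam, div_mul_cancel₀ _ (ne_of_gt hgi₁)]
        simp
      have hsum' : x = ∑ a ∈ t.erase (i₁ : Fin n → ℤ), c' a • toR a := by
        rw [Finset.sum_erase _ (by rw [hc'i₁]; simp),
          ← Finset.sum_attach t (fun a => c' a • toR a)]
        have h1 : ∑ i ∈ t.attach, c' (i : Fin n → ℤ) • toR (i : Fin n → ℤ)
            = ∑ i ∈ t.attach,
              (c (i : Fin n → ℤ) • toR (i : Fin n → ℤ) - lam • (g i • toR (i : Fin n → ℤ))) := by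
          refine Finset.sum_congr rfl fun i _ => ?_
          simp only [hc', dif_pos i.2, sub_smul, smul_smul]
        rw [h1, Finset.sum_sub_distrib, ← Finset.smul_sum, Finset.attach_eq_univ, hg0,
          smul_zero, sub_zero, ← Finset.attach_eq_univ,
          Finset.sum_attach t (fun a => c a • toR a), hx]
      have hcard' : (t.erase (i₁ : Fin n → ℤ)).card ≤ N := by
        have := Finset.card_erase_of_mem i₁.2 (s := t)
        omega
      exact ih (t.erase _) c' hcard'
        (Set.Subset.trans (by exact_mod_cast Finset.coe_subset.mpr (Finset.erase_subset _ _)) hsub)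
        hc'nn hsum'

def toQ {n : ℕ} (z : Fin n → ℤ) : Fin n → ℚ := fun i => (z i : ℚ)

def gR {n : ℕ} (q : Fin n → ℚ) : Fin n → ℝ := fun i => (q i : ℝ)

lemma gR_toQ {n : ℕ} (z : Fin n → ℤ) : gR (toQ z) = toR z := by
  funext i; simp [gR, toQ, toR]

lemma gR_inj {n : ℕ} : Function.Injective (gR (n := n)) := by
  intro a b h
  funext i
  have := congrFun h i
  simp only [gR] at this
  exact_mod_cast this

lemma toQ_inj {n : ℕ} : Function.Injective (toQ (n := n)) := by
  intro a b h
  funext i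
  have := congrFun h i
  simp only [toQ] at this
  exact_mod_cast this

lemma toQ_zsmul {n : ℕ} (z : ℤ) (a : Fin n → ℤ) : toQ (z • a) = (z : ℚ) • toQ a := by
  funext i; simp [toQ]

lemma toQ_sum {n : ℕ} {ι : Type*} (u : Finset ι) (w : ι → (Fin n → ℤ)) :
    toQ (∑ a ∈ u, w a) = ∑ a ∈ u, toQ (w a) := by
  funext i
  simp only [toQ, Finset.sum_apply]
  push_cast
  rfl

/-- the ℚ-linear map version of gR -/
def gRlin (n : ℕ) : (Fin n → ℚ) →ₗ[ℚ] (Fin n → ℝ) :=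
  LinearMap.pi fun i => (Algebra.linearMap ℚ ℝ).comp (LinearMap.proj i)

lemma gRlin_apply {n : ℕ} (q : Fin n → ℚ) : gRlin n q = gR q := by
  funext i; simp [gRlin, gR, Algebra.linearMap]

/-- coefficients over a linearly independent family of lattice points are rational -/
lemma rat_coeff {n : ℕ} (t : Finset (Fin n → ℤ))
    (hli : LinearIndependent ℝ (fun a : ↥t => toR (a : Fin n → ℤ)))
    (c : (Fin n → ℤ) → ℝ) (x : Fin n → ℤ)
    (hx : toR x = ∑ a ∈ t, c a • toR a) :
    ∃ q : (Fin n → ℤ) → ℚ, (∀ a ∈ t, (q a : ℝ) = c a) ∧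
      toQ x = ∑ a ∈ t, q a • toQ a := by
  classical
  -- ℚ-linear independence of the rational vectors
  have hliQ : LinearIndependent ℚ (fun a : ↥t => toQ (a : Fin n → ℤ)) := by
    have h1 : LinearIndependent ℚ (fun a : ↥t => toR (a : Fin n → ℤ)) :=
      hli.restrict_scalars (R := ℚ) (by
        intro a b hab
        simp only [Rat.smul_def, mul_one] at hab
        exact_mod_cast hab)
    refine LinearIndependent.of_comp (gRlin n) ?_
    have : (gRlin n ∘ fun a : ↥t => toQ (a : Fin n → ℤ))
        = fun a : ↥t => toR (a : Fin n → ℤ) := by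
      funext a; simp [Function.comp, gRlin_apply, gR_toQ]
    rw [this]; exact h1
  -- dual functionals
  have key : ∀ i : ↥t, ∃ f : (Fin n → ℚ) →ₗ[ℚ] ℚ,
      ∀ j : ↥t, f (toQ (j : Fin n → ℤ)) = if i = j then 1 else 0 := by
    intro i
    set v : ↥t → (Fin n → ℚ) := fun a => toQ (a : Fin n → ℤ) with hv
    let b : Module.Basis ↥t ℚ (Submodule.span ℚ (Set.range v)) := Module.Basis.span hliQ
    obtain ⟨f, hf⟩ := LinearMap.exists_extend (b.coord i)
    refine ⟨f, fun j => ?_⟩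
    have hj : v j ∈ Submodule.span ℚ (Set.range v) :=
      Submodule.subset_span ⟨j, rfl⟩
    have h1 : f (v j) = (b.coord i) ⟨v j, hj⟩ := by
      have := LinearMap.congr_fun hf ⟨v j, hj⟩
      simpa using this
    have h2 : (⟨v j, hj⟩ : Submodule.span ℚ (Set.range v)) = b j := by
      apply Subtype.ext
      simp [b, Module.Basis.span_apply]
    rw [h1, h2, Module.Basis.coord_apply, b.repr_self]
    simp [Finsupp.single_apply, eq_comm]
  choose f hf using key
  -- realified functionals
  let F : ↥t → ((Fin n → ℝ) →ₗ[ℝ] ℝ) := fun i =>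
    ∑ k, ((f i (Pi.single k 1) : ℝ) • LinearMap.proj k)
  have hF : ∀ (i : ↥t) (q : Fin n → ℚ), F i (gR q) = (f i q : ℝ) := by
    intro i q
    have hsingle : ∀ k : Fin n, (Pi.single k 1 : Fin n → ℚ) = fun j => if k = j then 1 else 0 :=
      fun k => by funext j; simp [Pi.single_apply, eq_comm]
    have hq : f i q = ∑ k, q k • f i (Pi.single k 1) := by
      conv_lhs => rw [LinearMap.pi_apply_eq_sum_univ (f i) q]
      exact Finset.sum_congr rfl fun k _ => by rw [hsingle]
    rw [hq]
    push_cast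
    simp only [F, LinearMap.sum_apply, LinearMap.smul_apply, LinearMap.proj_apply]
    refine Finset.sum_congr rfl fun k _ => ?_
    show (f i (Pi.single k 1) : ℝ) • (q k : ℝ) = ((q k • f i (Pi.single k 1) : ℚ) : ℝ)
    rw [smul_eq_mul, smul_eq_mul, Rat.cast_mul, mul_comm]
  -- each coefficient is rational
  refine ⟨fun a => if h : a ∈ t then f ⟨a, h⟩ (toQ x) else 0, ?_, ?_⟩
  · intro a ha
    simp only [dif_pos ha]
    have h1 : F ⟨a, ha⟩ (toR x) = (f ⟨a, ha⟩ (toQ x) : ℝ) := by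
      rw [← gR_toQ]; exact hF _ _
    rw [← h1, hx, map_sum]
    rw [← Finset.sum_attach t (fun b => F ⟨a, ha⟩ (c b • toR b))]
    have h2 : ∀ j ∈ t.attach, F ⟨a, ha⟩ (c (j : Fin n → ℤ) • toR (j : Fin n → ℤ))
        = c (j : Fin n → ℤ) * (if (⟨a, ha⟩ : ↥t) = j then 1 else 0) := by
      intro j _
      rw [map_smul, smul_eq_mul]
      congr 1
      rw [← gR_toQ, hF, hf]
      split <;> simp
    rw [Finset.sum_congr rfl h2, Finset.attach_eq_univ]
    simp
  · -- the rational identity, via injectivity of gR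
    apply gR_inj
    have hsmul : ∀ (q : ℚ) (v : Fin n → ℚ), gR (q • v) = (q : ℝ) • gR v := by
      intro q v; funext i; simp [gR]
    have hadd : ∀ (u : Finset (Fin n → ℤ)) (w : (Fin n → ℤ) → (Fin n → ℚ)),
        gR (∑ a ∈ u, w a) = ∑ a ∈ u, gR (w a) := by
      intro u w
      funext i
      simp only [gR, Finset.sum_apply]
      push_cast
      rfl
    rw [gR_toQ, hx, hadd]
    refine Finset.sum_congr rfl fun a ha => ?_
    rw [hsmul, gR_toQ]
    simp only [dif_pos ha]
    have h1 : F ⟨a, ha⟩ (toR x) = (f ⟨a, ha⟩ (toQ x) : ℝ) := by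
      rw [← gR_toQ]; exact hF _ _
    congr 1
    rw [← h1, hx, map_sum]
    rw [← Finset.sum_attach t (fun b => F ⟨a, ha⟩ (c b • toR b))]
    have h2 : ∀ j ∈ t.attach, F ⟨a, ha⟩ (c (j : Fin n → ℤ) • toR (j : Fin n → ℤ))
        = c (j : Fin n → ℤ) * (if (⟨a, ha⟩ : ↥t) = j then 1 else 0) := by
      intro j _
      rw [map_smul, smul_eq_mul]
      congr 1
      rw [← gR_toQ, hF, hf]
      split <;> simp
    rw [Finset.sum_congr rfl h2, Finset.attach_eq_univ]
    simp

lemma nat_mul_of_den_dvd (q : ℚ) (N : ℕ) (hd : q.den ∣ N) (hq : 0 ≤ q) :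
    ∃ m : ℕ, (m : ℚ) = (N : ℚ) * q := by
  obtain ⟨k, hk⟩ := hd
  have hden : ((q.den : ℚ)) * q = (q.num : ℚ) := by
    rw [mul_comm]
    exact_mod_cast Rat.mul_den_eq_num q
  have hnum : 0 ≤ q.num := Rat.num_nonneg.mpr hq
  refine ⟨k * q.num.toNat, ?_⟩
  have h1 : ((q.num.toNat : ℚ)) = (q.num : ℚ) := by
    have := Int.toNat_of_nonneg hnum
    exact_mod_cast congrArg (fun z : ℤ => (z : ℚ)) this
  push_cast [hk]
  rw [h1, mul_comm (q.den : ℚ) k, mul_assoc, hden]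

/-- A lattice point in the real cone over a normal monoid lies in the monoid. -/
lemma mem_of_toR_mem_cone {n : ℕ} (M : AddSubmonoid (Fin n → ℤ))
    (hnorm : ∀ (x : Fin n → ℤ) (k : ℕ), 0 < k → (k : ℤ) • x ∈ M → x ∈ M)
    (x : Fin n → ℤ) (hx : toR x ∈ coneOf (M : Set (Fin n → ℤ))) : x ∈ M := by
  classical
  obtain ⟨t0, c0, hsub0, hc0, hx0⟩ := hx
  obtain ⟨t, c, hsub, hc, hxe, hli⟩ :=
    carath_aux (M : Set (Fin n → ℤ)) (toR x) t0.card t0 c0 le_rfl hsub0 hc0 hx0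
  obtain ⟨q, hqc, hqx⟩ := rat_coeff t hli c x hxe
  have hq0 : ∀ a ∈ t, 0 ≤ q a := by
    intro a ha
    have h1 : (q a : ℝ) = c a := hqc a ha
    have := hc a
    rw [← h1] at this
    exact_mod_cast this
  set N : ℕ := ∏ a ∈ t, (q a).den with hN
  have hNpos : 0 < N := Finset.prod_pos fun a _ => (q a).pos
  have hm : ∀ i : ↥t, ∃ m : ℕ, (m : ℚ) = (N : ℚ) * q (i : Fin n → ℤ) := by
    intro i
    exact nat_mul_of_den_dvd _ N (Finset.dvd_prod_of_mem _ i.2) (hq0 _ i.2)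
  choose m hm using hm
  -- the integer identity
  have hint : (N : ℤ) • x = ∑ i ∈ t.attach, (m i : ℤ) • (i : Fin n → ℤ) := by
    apply toQ_inj
    rw [toQ_zsmul, toQ_sum, hqx, Finset.smul_sum,
      ← Finset.sum_attach t (fun a => ((N : ℤ) : ℚ) • (q a • toQ a))]
    refine Finset.sum_congr rfl fun i _ => ?_
    rw [toQ_zsmul, smul_smul]
    congr 1
    push_cast
    rw [hm]
  have hmem : (N : ℤ) • x ∈ M := by
    rw [hint]
    refine AddSubmonoid.sum_mem M fun i _ => ?_
    rw [show ((m i : ℤ)) • (i : Fin n → ℤ) = m i • (i : Fin n → ℤ) from natCast_zsmul _ _]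
    exact AddSubmonoid.nsmul_mem M (hsub i.2) (m i)
  exact hnorm x N hNpos hmem

lemma sigma_nonneg {n s : ℕ} (M : AddSubmonoid (Fin n → ℤ))
    (σ : Fin s → ((Fin n → ℤ) →ₗ[ℤ] ℤ))
    (hcone : coneOf (M : Set (Fin n → ℤ)) = {x | ∀ i, 0 ≤ realForm (σ i) x})
    {a : Fin n → ℤ} (ha : a ∈ M) (i : Fin s) : 0 ≤ σ i a := by
  have h1 : toR a ∈ coneOf (M : Set (Fin n → ℤ)) := toR_mem_coneOf ha
  rw [hcone] at h1
  have h2 := h1 i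
  rw [realForm_toR] at h2
  exact_mod_cast h2

/-- If `y ∈ M` satisfies `σᵢ y = 1` for all support forms, then
`relint M = y + M`. -/
theorem relint_eq_add_of_forms_one
    (n s : ℕ) (M : AddSubmonoid (Fin n → ℤ)) (hfg : M.FG)
    (hpos : ∀ a ∈ M, -a ∈ M → a = 0)
    (hnorm : ∀ (x : Fin n → ℤ) (k : ℕ), 0 < k → (k : ℤ) • x ∈ M → x ∈ M)
    (hgp : AddSubgroup.closure (M : Set (Fin n → ℤ)) = ⊤)
    (σ : Fin s → ((Fin n → ℤ) →ₗ[ℤ] ℤ))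
    (hcone : coneOf (M : Set (Fin n → ℤ)) = {x | ∀ i, 0 ≤ realForm (σ i) x})
    (hirr : ∀ i, ∃ x : Fin n → ℝ,
      (∀ j, j ≠ i → 0 ≤ realForm (σ j) x) ∧ realForm (σ i) x < 0)
    (hprim : ∀ i, Finset.univ.gcd (fun k => σ i (Pi.single k 1)) = 1)
    (y : Fin n → ℤ) (hy : y ∈ M) (hy1 : ∀ i, σ i y = 1) :
    relintM M σ = (fun a => y + a) '' (M : Set (Fin n → ℤ)) := by
  ext a
  simp only [relintM, Set.mem_setOf_eq, Set.mem_image, SetLike.mem_coe]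
  constructor
  · rintro ⟨haM, hapos⟩
    refine ⟨a - y, ?_, by abel⟩
    apply mem_of_toR_mem_cone M hnorm
    rw [hcone]
    intro i
    rw [realForm_toR]
    have h1 : 0 < σ i a := hapos i
    have h2 : σ i (a - y) = σ i a - 1 := by
      rw [map_sub, hy1]
    have h3 : 0 ≤ σ i (a - y) := by omega
    exact_mod_cast h3
  · rintro ⟨b, hb, rfl⟩
    refine ⟨M.add_mem hy hb, fun i => ?_⟩
    have h1 : 0 ≤ σ i b := sigma_nonneg M σ hcone hb i
    have h2 : σ i (y + b) = 1 + σ i b := by rw [map_add, hy1]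
    omega

end
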